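/- In ℂ[x₁,x₂,x₃,x₄] one has the identity (x₁ − x₃)·(u₁ + x₂·u₂ − π₁₃) + (x₂ − x₄)·(u₁ + x₃·u₂ − π₂₄) = 0. (Equivalently, the polynomial a = (u₁ + x₃u₂ − π₂₄)/(x₁ − x₃) also equals −(u₁ + x₂u₂ − π₁₃)/(x₂ − x₄).) -/

import Mathlib

open MvPolynomial

set_option maxRecDepth 10000 in
set_option maxHeartbeats 2000000 in
/-- In `ℂ[x₁,x₂,x₃,x₄]` one has the identity
`(x₁ − x₃)·(u₁ + x₂·u₂ − π₁₃) + (x₂ − x₄)·(u₁ + x₃·u₂ − π₂₄) = 0`, where `u₁`, `u₂`,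
`π₁₃`, `π₂₄` are the exact polynomial quotients described in the context.
(Variables: `x₁ = X 0`, `x₂ = X 1`, `x₃ = X 2`, `x₄ = X 3`.) -/
theorem stmt_12 (w : Polynomial ℂ) (p : MvPolynomial (Fin 2) ℂ)
    (hp : aeval ![(X 0 : MvPolynomial (Fin 2) ℂ) + X 1, X 0 * X 1] p =
      Polynomial.aeval (X 0 : MvPolynomial (Fin 2) ℂ) w +
        Polynomial.aeval (X 1 : MvPolynomial (Fin 2) ℂ) w)
    (u₁ u₂ π₁₃ π₂₄ : MvPolynomial (Fin 4) ℂ)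
    (hu₁ : (X 0 + X 1 - X 2 - X 3) * u₁ =
      aeval ![(X 0 : MvPolynomial (Fin 4) ℂ) + X 1, X 0 * X 1] p -
        aeval ![(X 2 : MvPolynomial (Fin 4) ℂ) + X 3, X 0 * X 1] p)
    (hu₂ : (X 0 * X 1 - X 2 * X 3) * u₂ =
      aeval ![(X 2 : MvPolynomial (Fin 4) ℂ) + X 3, X 0 * X 1] p -
        aeval ![(X 2 : MvPolynomial (Fin 4) ℂ) + X 3, X 2 * X 3] p)
    (hπ₁₃ : (X 0 - X 2) * π₁₃ =
      Polynomial.aeval (X 0 : MvPolynomial (Fin 4) ℂ) w -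
        Polynomial.aeval (X 2 : MvPolynomial (Fin 4) ℂ) w)
    (hπ₂₄ : (X 1 - X 3) * π₂₄ =
      Polynomial.aeval (X 1 : MvPolynomial (Fin 4) ℂ) w -
        Polynomial.aeval (X 3 : MvPolynomial (Fin 4) ℂ) w) :
    (X 0 - X 2) * (u₁ + X 1 * u₂ - π₁₃) + (X 1 - X 3) * (u₁ + X 2 * u₂ - π₂₄) = 0 := by
  -- p(x₁+x₂, x₁x₂) = w(x₁)+w(x₂) in ℂ[x₁,…,x₄]
  have hA : aeval ![(X 0 : MvPolynomial (Fin 4) ℂ) + X 1, X 0 * X 1] p =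
      Polynomial.aeval (X 0 : MvPolynomial (Fin 4) ℂ) w +
        Polynomial.aeval (X 1 : MvPolynomial (Fin 4) ℂ) w := by
    have h := congrArg (aeval (R := ℂ) ![(X 0 : MvPolynomial (Fin 4) ℂ), X 1]) hp
    rw [comp_aeval_apply] at h
    simp only [map_add, ← Polynomial.aeval_algHom_apply, aeval_X, map_mul] at h
    convert h using 2
    ext i; fin_cases i <;> simp
    all_goals simp
  have hC : aeval ![(X 2 : MvPolynomial (Fin 4) ℂ) + X 3, X 2 * X 3] p =
      Polynomial.aeval (X 2 : MvPolynomial (Fin 4) ℂ) w +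
        Polynomial.aeval (X 3 : MvPolynomial (Fin 4) ℂ) w := by
    have h := congrArg (aeval (R := ℂ) ![(X 2 : MvPolynomial (Fin 4) ℂ), X 3]) hp
    rw [comp_aeval_apply] at h
    simp only [map_add, ← Polynomial.aeval_algHom_apply, aeval_X, map_mul] at h
    convert h using 2
    ext i; fin_cases i <;> simp
    all_goals simp
  rw [hA] at hu₁
  rw [hC] at hu₂
  set B := aeval ![(X 2 : MvPolynomial (Fin 4) ℂ) + X 3, X 0 * X 1] p with hB
  set F : MvPolynomial (Fin 4) ℂ :=
    (X 0 + X 1 - X 2 - X 3) * (X 0 * X 1 - X 2 * X 3) * (X 0 - X 2) * (X 1 - X 3) with hF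
  have hFne : F ≠ 0 := by
    intro h
    have := congrArg (eval ![2, 1, 0, 0]) h
    rw [hF] at this
    simp only [map_mul, map_sub, map_add, eval_X, Matrix.cons_val_zero, Matrix.cons_val_one,
      Matrix.head_cons] at this
    norm_num [Matrix.cons_val_two, Matrix.cons_val_three, Matrix.tail_cons, Matrix.head_cons] at this
  apply mul_left_cancel₀ hFne
  rw [mul_zero]
  linear_combination F * hu₁ + F * hu₂ - F * hπ₁₃ - F * hπ₂₄
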